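/- Let σ : ℝ → ℝ be the sigmoid function σ(x) = 1/(1 + e^{−x}). Then: (a) 0 < 1 − σ(x) ≤ e^{−x} for all x ≥ 0; (b) 0 < σ(x) ≤ e^{x} for all x ≤ 0; (c) for every k ∈ ℕ with k ≥ 1 there exists a constant C_k > 0 such that |σ^{(k)}(x)| ≤ C_k·e^{−|x|} for all x ∈ ℝ, where σ^{(k)} denotes the k-th derivative of σ. (These properties state that the sigmoid is exponential (j,0)-PU-admissible for every j ∈ ℕ₀.) -/

import Mathlib

noncomputable def sigmoid (x : ℝ) : ℝ := 1 / (1 + Real.exp (-x))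

lemma denom_pos (x : ℝ) : 0 < 1 + Real.exp (-x) := by positivity

lemma sigmoid_pos (x : ℝ) : 0 < sigmoid x := by
  unfold sigmoid; positivity

lemma one_sub_sigmoid (x : ℝ) : 1 - sigmoid x = Real.exp (-x) / (1 + Real.exp (-x)) := by
  unfold sigmoid
  field_simp
  ring

lemma one_sub_sigmoid_pos (x : ℝ) : 0 < 1 - sigmoid x := by
  rw [one_sub_sigmoid]; positivity

lemma one_sub_sigmoid_le (x : ℝ) : 1 - sigmoid x ≤ Real.exp (-x) := by
  rw [one_sub_sigmoid]
  have h := denom_pos x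
  rw [div_le_iff₀ h]
  nlinarith [Real.exp_pos (-x)]

lemma sigmoid_le (x : ℝ) : sigmoid x ≤ Real.exp x := by
  unfold sigmoid
  rw [div_le_iff₀ (denom_pos x)]
  have h : Real.exp x * Real.exp (-x) = 1 := by
    rw [← Real.exp_add]; simp
  nlinarith [Real.exp_pos x, Real.exp_pos (-x)]

lemma hasDerivAt_sigmoid (x : ℝ) :
    HasDerivAt sigmoid (sigmoid x * (1 - sigmoid x)) x := by
  have h1 : HasDerivAt (fun x : ℝ => 1 + Real.exp (-x)) (-Real.exp (-x)) x := by
    simpa using ((Real.hasDerivAt_exp (-x)).comp x (hasDerivAt_neg x)).const_add 1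
  have h2 := h1.inv (ne_of_gt (denom_pos x))
  have heq : sigmoid = fun y => (1 + Real.exp (-y))⁻¹ := by
    funext y; simp [sigmoid, one_div]
  rw [heq]
  refine h2.congr_deriv ?_
  have := denom_pos x
  beta_reduce
  field_simp
  ring

lemma sigmoid_iteratedDeriv (k : ℕ) : ∃ Q : Polynomial ℝ,
    ∀ x, iteratedDeriv (k + 1) sigmoid x
      = sigmoid x * (1 - sigmoid x) * Q.eval (sigmoid x) := by
  induction k with
  | zero =>
    refine ⟨1, fun x => ?_⟩
    rw [iteratedDeriv_one, (hasDerivAt_sigmoid x).deriv]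
    simp
  | succ n ih =>
    obtain ⟨Q, hQ⟩ := ih
    set P : Polynomial ℝ := Polynomial.X * (1 - Polynomial.X) * Q with hP
    refine ⟨P.derivative, fun x => ?_⟩
    have hfun : iteratedDeriv (n + 1) sigmoid = fun y => P.eval (sigmoid y) := by
      funext y
      rw [hQ y]
      simp [hP]
    have hd : HasDerivAt (fun y => P.eval (sigmoid y))
        (P.derivative.eval (sigmoid x) * (sigmoid x * (1 - sigmoid x))) x :=
      (Polynomial.hasDerivAt P (sigmoid x)).comp x (hasDerivAt_sigmoid x)
    rw [iteratedDeriv_succ, hfun, hd.deriv]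
    ring

lemma sigmoid_mul_le (x : ℝ) : sigmoid x * (1 - sigmoid x) ≤ Real.exp (-|x|) := by
  rcases le_total 0 x with h | h
  · rw [abs_of_nonneg h]
    have h1 : sigmoid x ≤ 1 := by nlinarith [one_sub_sigmoid_pos x]
    nlinarith [one_sub_sigmoid_le x, sigmoid_pos x, one_sub_sigmoid_pos x]
  · rw [abs_of_nonpos h, neg_neg]
    have h1 : 1 - sigmoid x ≤ 1 := by nlinarith [sigmoid_pos x]
    nlinarith [sigmoid_le x, sigmoid_pos x, one_sub_sigmoid_pos x]

theorem sigmoid_PU_admissible :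
    (∀ x : ℝ, 0 ≤ x → 0 < 1 - sigmoid x ∧ 1 - sigmoid x ≤ Real.exp (-x)) ∧
    (∀ x : ℝ, x ≤ 0 → 0 < sigmoid x ∧ sigmoid x ≤ Real.exp x) ∧
    (∀ k : ℕ, 1 ≤ k → ∃ C : ℝ, 0 < C ∧
      ∀ x : ℝ, |iteratedDeriv k sigmoid x| ≤ C * Real.exp (-|x|)) := by
  refine ⟨fun x _ => ⟨one_sub_sigmoid_pos x, one_sub_sigmoid_le x⟩,
    fun x _ => ⟨sigmoid_pos x, sigmoid_le x⟩, fun k hk => ?_⟩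
  obtain ⟨m, rfl⟩ : ∃ m, k = m + 1 := ⟨k - 1, by omega⟩
  obtain ⟨Q, hQ⟩ := sigmoid_iteratedDeriv m
  have hcont : ContinuousOn (fun s => |Q.eval s|) (Set.Icc (0:ℝ) 1) :=
    (Q.continuous_aeval.abs).continuousOn
  obtain ⟨z, hz, hzmax⟩ := isCompact_Icc.exists_isMaxOn
    (Set.nonempty_Icc.mpr zero_le_one) hcont
  refine ⟨max (|Q.eval z|) 1, lt_of_lt_of_le one_pos (le_max_right _ _), fun x => ?_⟩
  have hs0 := sigmoid_pos x
  have hs1 := one_sub_sigmoid_pos x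
  have hmem : sigmoid x ∈ Set.Icc (0:ℝ) 1 := ⟨le_of_lt hs0, by linarith⟩
  have hb : |Q.eval (sigmoid x)| ≤ max (|Q.eval z|) 1 :=
    le_max_of_le_left (hzmax hmem)
  rw [hQ x, abs_mul, abs_of_pos (mul_pos hs0 hs1)]
  calc sigmoid x * (1 - sigmoid x) * |Q.eval (sigmoid x)|
      ≤ Real.exp (-|x|) * (max (|Q.eval z|) 1) := by
        apply mul_le_mul (sigmoid_mul_le x) hb (abs_nonneg _) (Real.exp_pos _).le
    _ = max (|Q.eval z|) 1 * Real.exp (-|x|) := by ring
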